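/- Every clean map f on an L_Λ modal space X is continuous (indeed uniformly continuous) with respect to the Stone topology: for every formula φ, the preimage f^{-1}(U_φ) is open in the Stone topology. -/

import Mathlib

/-- Modal formulas over atoms `Φ` and agents `I`. -/
inductive Form (Φ I : Type) : Type
  | top : Form Φ I
  | atom : Φ → Form Φ I
  | neg : Form Φ I → Form Φ I
  | and : Form Φ I → Form Φ I → Form Φ I
  | box : I → Form Φ I → Form Φ I

/-- A Kripke model: worlds, accessibility per agent, valuation. -/
structure KripkeModel (Φ I : Type) where
  W : Type
  R : I → W → W → Prop
  V : Φ → W → Prop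

/-- Satisfaction of a formula at a world. -/
def KripkeModel.sat {Φ I : Type} (M : KripkeModel Φ I) : M.W → Form Φ I → Prop
  | _, Form.top => True
  | w, Form.atom p => M.V p w
  | w, Form.neg φ => ¬ M.sat w φ
  | w, Form.and φ ψ => M.sat w φ ∧ M.sat w ψ
  | w, Form.box i φ => ∀ v, M.R i w v → M.sat v φ

/-- A pointed Kripke model. -/
structure PointedModel (Φ I : Type) where
  M : KripkeModel Φ I
  s : M.W

def PointedModel.sat {Φ I : Type} (x : PointedModel Φ I) (φ : Form Φ I) : Prop :=
  x.M.sat x.s φ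

/-- Modal equivalence: satisfying the same formulas. -/
def modEquiv {Φ I : Type} (x y : PointedModel Φ I) : Prop :=
  ∀ φ : Form Φ I, x.sat φ ↔ y.sat φ

/-- `n`-bisimilarity of pointed models. -/
def nBisim {Φ I : Type} : ℕ → PointedModel Φ I → PointedModel Φ I → Prop
  | 0, x, y => ∀ p, x.M.V p x.s ↔ y.M.V p y.s
  | n+1, x, y => (∀ p, x.M.V p x.s ↔ y.M.V p y.s) ∧
      (∀ i t, x.M.R i x.s t → ∃ u, y.M.R i y.s u ∧ nBisim n ⟨x.M, t⟩ ⟨y.M, u⟩) ∧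
      (∀ i u, y.M.R i y.s u → ∃ t, x.M.R i x.s t ∧ nBisim n ⟨x.M, t⟩ ⟨y.M, u⟩)

/-- (Full) bisimilarity of pointed models. -/
def Bisimilar {Φ I : Type} (x y : PointedModel Φ I) : Prop :=
  ∃ Z : x.M.W → y.M.W → Prop, Z x.s y.s ∧
    (∀ s t, Z s t → ∀ p, x.M.V p s ↔ y.M.V p t) ∧
    (∀ s t, Z s t → ∀ i s', x.M.R i s s' → ∃ t', y.M.R i t t' ∧ Z s' t') ∧
    (∀ s t, Z s t → ∀ i t', y.M.R i t t' → ∃ s', x.M.R i s s' ∧ Z s' t')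

/-- The modal space over `X`: the quotient of `X` by modal equivalence. -/
def MSpace {Φ I : Type} (X : Set (PointedModel Φ I)) : Type 1 :=
  Quot (fun x y : X => modEquiv x.1 y.1)

/-- Satisfaction on the modal space (well-defined on equivalence classes). -/
def satQ {Φ I : Type} {X : Set (PointedModel Φ I)} (φ : Form Φ I) : MSpace X → Prop :=
  Quot.lift (fun x : X => x.1.sat φ) (fun _ _ h => propext (h φ))

/-- The basic opens of the Stone topology: `U_φ = {x : x ⊨ φ}`. -/
def stoneBasis {Φ I : Type} (X : Set (PointedModel Φ I)) : Set (Set (MSpace X)) :=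
  {S | ∃ φ : Form Φ I, S = {a : MSpace X | satQ φ a}}

/-- The Stone topology on a modal space. -/
def stoneTop {Φ I : Type} (X : Set (PointedModel Φ I)) : TopologicalSpace (MSpace X) :=
  TopologicalSpace.generateFrom (stoneBasis X)

/-- A multi-pointed action model with postconditions: actions, accessibility,
preconditions, postconditions (a partial assignment of truth values to atoms,
representing `⊤` or a conjunctive clause of literals), and a nonempty set of
designated actions. -/
structure ActionModel (Φ I : Type) where
  A : Type
  R : I → A → A → Prop
  pre : A → Form Φ I
  post : A → Φ → Option Bool
  Γ : Set A
  Γ_nonempty : Γ.Nonempty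

/-- Product update `x ⊗ Σ` of a pointed model with an action model, with actual
action `σ` (which must be executable at the point of `x`). -/
def productUpdate {Φ I : Type} (x : PointedModel Φ I) (E : ActionModel Φ I)
    (σ : E.A) (hσ : x.M.sat x.s (E.pre σ)) : PointedModel Φ I where
  M := { W := {p : x.M.W × E.A // x.M.sat p.1 (E.pre p.2)}
         R := fun i p q => x.M.R i p.1.1 q.1.1 ∧ E.R i p.1.2 q.1.2
         V := fun pr p =>
           match E.post p.1.2 pr with
           | some b => b = true
           | none => x.M.V pr p.1.1 }
  s := ⟨(x.s, σ), hσ⟩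

/-- `E` is deterministic over `X`: preconditions of distinct designated actions are
jointly unsatisfiable over `X`. -/
def Deterministic {Φ I : Type} (X : Set (PointedModel Φ I)) (E : ActionModel Φ I) : Prop :=
  ∀ y ∈ X, ∀ σ ∈ E.Γ, ∀ σ' ∈ E.Γ, σ ≠ σ' →
    ¬ (y.sat (E.pre σ) ∧ y.sat (E.pre σ'))

/-- `E` is exhaustive over `X`: every model in `X` satisfies some designated precondition. -/
def Exhaustive {Φ I : Type} (X : Set (PointedModel Φ I)) (E : ActionModel Φ I) : Prop :=
  ∀ y ∈ X, ∃ σ ∈ E.Γ, y.sat (E.pre σ)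

/-- Implication abbreviation. -/
def fimp {Φ I : Type} (a b : Form Φ I) : Form Φ I := Form.neg (Form.and a (Form.neg b))

lemma sat_fimp {Φ I : Type} (M : KripkeModel Φ I) (v : M.W) (a b : Form Φ I) :
    M.sat v (fimp a b) ↔ (M.sat v a → M.sat v b) := by
  simp only [fimp, KripkeModel.sat]; tauto

/-- Finite conjunction of a list of formulas. -/
def conjList {Φ I : Type} : List (Form Φ I) → Form Φ I
  | [] => Form.top
  | χ :: L => Form.and χ (conjList L)

lemma sat_conjList {Φ I : Type} (M : KripkeModel Φ I) (v : M.W) :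
    ∀ L : List (Form Φ I), M.sat v (conjList L) ↔ ∀ χ ∈ L, M.sat v χ
  | [] => by simp [conjList, KripkeModel.sat]
  | χ :: L => by
      simp only [conjList, KripkeModel.sat, List.mem_cons, sat_conjList M v L]
      constructor
      · rintro ⟨h1, h2⟩ ψ (rfl | hψ)
        · exact h1
        · exact h2 _ hψ
      · intro h; exact ⟨h _ (Or.inl rfl), fun ψ hψ => h _ (Or.inr hψ)⟩

/-- DEL reduction: for each formula `φ` there is a map `σ ↦ g σ`, with finite range,
such that executing `σ` yields `φ` iff the original model satisfies `g σ`. -/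
lemma reduction {Φ I : Type} (E : ActionModel Φ I)
    (hprefin : ∃ S : Set (Form Φ I), S.Finite ∧ ∀ σ : E.A, ∃ ψ ∈ S,
      ∀ y : PointedModel Φ I, y.sat (E.pre σ) ↔ y.sat ψ) (φ : Form Φ I) :
    ∃ g : E.A → Form Φ I, (∃ T : Set (Form Φ I), T.Finite ∧ ∀ σ, g σ ∈ T) ∧
      ∀ (M : KripkeModel Φ I) (v : M.W) (σ : E.A) (h : M.sat v (E.pre σ)),
        (productUpdate ⟨M, v⟩ E σ h).sat φ ↔ M.sat v (g σ) := by
  classical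
  obtain ⟨S, hSfin, hS⟩ := hprefin
  induction φ with
  | top =>
      exact ⟨fun _ => Form.top, ⟨{Form.top}, Set.finite_singleton _, fun _ => rfl⟩,
        fun M v σ h => Iff.rfl⟩
  | atom p =>
      refine ⟨fun σ => match E.post σ p with
          | some true => Form.top
          | some false => Form.neg Form.top
          | none => Form.atom p,
        ⟨{Form.top, Form.neg Form.top, Form.atom p}, (Set.finite_singleton _).insert _ |>.insert _,
          fun σ => ?_⟩, fun M v σ h => ?_⟩
      · rcases hb : E.post σ p with _ | b
        · simp [hb]
        · cases b <;> simp [hb]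
      · show (match E.post σ p with
            | some b => b = true
            | none => M.V p v) ↔ _
        rcases hb : E.post σ p with _ | b
        · simp [hb, PointedModel.sat, KripkeModel.sat]
        · cases b <;> simp [hb, PointedModel.sat, KripkeModel.sat]
  | neg φ ih =>
      obtain ⟨g, ⟨T, hTfin, hT⟩, hg⟩ := ih
      refine ⟨fun σ => Form.neg (g σ), ⟨Form.neg '' T, hTfin.image _,
        fun σ => ⟨g σ, hT σ, rfl⟩⟩, fun M v σ h => ?_⟩
      show ¬ _ ↔ ¬ _
      exact not_congr (hg M v σ h)
  | and φ ψ ihφ ihψ =>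
      obtain ⟨g1, ⟨T1, hT1fin, hT1⟩, hg1⟩ := ihφ
      obtain ⟨g2, ⟨T2, hT2fin, hT2⟩, hg2⟩ := ihψ
      refine ⟨fun σ => Form.and (g1 σ) (g2 σ),
        ⟨Set.image2 Form.and T1 T2, hT1fin.image2 _ hT2fin,
          fun σ => Set.mem_image2_of_mem (hT1 σ) (hT2 σ)⟩, fun M v σ h => ?_⟩
      show _ ∧ _ ↔ _ ∧ _
      exact and_congr (hg1 M v σ h) (hg2 M v σ h)
  | box i φ ih =>
      obtain ⟨g, ⟨T, hTfin, hT⟩, hg⟩ := ih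
      -- the finite set of candidate (precondition, reduction) pairs
      set F : Finset (Form Φ I × Form Φ I) := hSfin.toFinset ×ˢ hTfin.toFinset with hF
      -- predicate: the pair is realized by some successor action of σ
      set P : E.A → Form Φ I × Form Φ I → Prop := fun σ pc =>
        ∃ τ, E.R i σ τ ∧ (∀ z : PointedModel Φ I, z.sat (E.pre τ) ↔ z.sat pc.1) ∧
          g τ = pc.2 with hP
      refine ⟨fun σ => conjList (((F.filter (P σ)).toList).map
          (fun pc => Form.box i (fimp pc.1 pc.2))),
        ⟨↑(F.powerset.image (fun G : Finset (Form Φ I × Form Φ I) =>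
            conjList ((G.toList).map (fun pc => Form.box i (fimp pc.1 pc.2))))),
          (F.powerset.image _).finite_toSet, fun σ => ?_⟩, fun M v σ h => ?_⟩
      · exact Finset.mem_coe.mpr (Finset.mem_image_of_mem _
          (Finset.mem_powerset.mpr (Finset.filter_subset _ _)))
      · have hsem : (productUpdate ⟨M, v⟩ E σ h).sat (Form.box i φ) ↔
            ∀ τ, E.R i σ τ → ∀ w, M.R i v w → ∀ hw : M.sat w (E.pre τ),
              (productUpdate ⟨M, w⟩ E τ hw).sat φ := by
          constructor
          · intro hb τ hτ w hw hwpre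
            exact hb ⟨(w, τ), hwpre⟩ ⟨hw, hτ⟩
          · rintro hb ⟨⟨w, τ⟩, hwpre⟩ ⟨hw, hτ⟩
            exact hb τ hτ w hw hwpre
        rw [hsem, sat_conjList]
        constructor
        · intro hall χ hχ
          obtain ⟨pc, hpc, rfl⟩ := List.mem_map.mp hχ
          obtain ⟨_, τ, hτ, hψ, hgτ⟩ := Finset.mem_filter.mp (Finset.mem_toList.mp hpc)
          intro w hw
          rw [sat_fimp]
          intro hwψ
          have hwpre : M.sat w (E.pre τ) := (hψ ⟨M, w⟩).mpr hwψ
          have := (hg M w τ hwpre).mp (hall τ hτ w hw hwpre)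
          rw [hgτ] at this
          exact this
        · intro hall τ hτ w hw hwpre
          obtain ⟨ψ, hψS, hψ⟩ := hS τ
          have hmem : (ψ, g τ) ∈ F.filter (P σ) := by
            refine Finset.mem_filter.mpr ⟨?_, τ, hτ, hψ, rfl⟩
            exact Finset.mem_product.mpr ⟨hSfin.mem_toFinset.mpr hψS, hTfin.mem_toFinset.mpr (hT τ)⟩
          have hbox : M.sat v (Form.box i (fimp ψ (g τ))) := by
            apply hall
            exact List.mem_map.mpr ⟨(ψ, g τ), Finset.mem_toList.mpr hmem, rfl⟩
          have := (sat_fimp M w ψ (g τ)).mp (hbox w hw)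
          have hgτ : M.sat w (g τ) := this ((hψ ⟨M, w⟩).mp hwpre)
          exact (hg M w τ hwpre).mpr hgτ

/-- Every clean map `f` on a modal space — induced via product update by
a precondition-finite multi-pointed action model that is closing, deterministic and
exhaustive over the underlying set of models — is continuous with respect to the
Stone topology; in particular the preimage of every basic open `U_φ` is open. -/
theorem stmt_12 {Φ I : Type} (X : Set (PointedModel Φ I)) (E : ActionModel Φ I)
    (hdet : Deterministic X E) (hex : Exhaustive X E)
    (hprefin : ∃ S : Set (Form Φ I), S.Finite ∧ ∀ σ : E.A, ∃ ψ ∈ S,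
      ∀ y : PointedModel Φ I, y.sat (E.pre σ) ↔ y.sat ψ)
    (hclosing : ∀ (x : PointedModel Φ I), x ∈ X → ∀ (σ : E.A), σ ∈ E.Γ →
      ∀ hpre : x.M.sat x.s (E.pre σ), productUpdate x E σ hpre ∈ X)
    (f : MSpace X → MSpace X)
    (hf : ∀ (x : X) (σ : E.A), σ ∈ E.Γ → ∀ (hpre : x.1.M.sat x.1.s (E.pre σ))
      (hmem : productUpdate x.1 E σ hpre ∈ X),
      f (Quot.mk _ x) = Quot.mk _ (⟨productUpdate x.1 E σ hpre, hmem⟩ : X)) :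
    @Continuous _ _ (stoneTop X) (stoneTop X) f ∧
    ∀ φ : Form Φ I, (stoneTop X).IsOpen (f ⁻¹' {a : MSpace X | satQ φ a}) := by
  classical
  letI : TopologicalSpace (MSpace X) := stoneTop X
  have hbasic : ∀ ψ : Form Φ I, IsOpen {a : MSpace X | satQ ψ a} := fun ψ =>
    TopologicalSpace.isOpen_generateFrom_of_mem ⟨ψ, rfl⟩
  have key : ∀ φ : Form Φ I, IsOpen (f ⁻¹' {a : MSpace X | satQ φ a}) := by
    intro φ
    obtain ⟨g, -, red⟩ := reduction E hprefin φ
    have heq : f ⁻¹' {a : MSpace X | satQ φ a} =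
        ⋃ σ ∈ E.Γ, ({a : MSpace X | satQ (E.pre σ) a} ∩ {a : MSpace X | satQ (g σ) a}) := by
      ext a
      induction a using Quot.ind with
      | _ x =>
        refine Iff.trans Set.mem_preimage (Iff.trans ?_ Set.mem_iUnion₂.symm)
        show satQ φ (f (Quot.mk _ x)) ↔ ∃ σ, ∃ _ : σ ∈ E.Γ,
          satQ (E.pre σ) (Quot.mk _ x : MSpace X) ∧ satQ (g σ) (Quot.mk _ x : MSpace X)
        constructor
        · intro hx
          obtain ⟨σ, hσ, hpre⟩ := hex x.1 x.2
          have hpre' : x.1.M.sat x.1.s (E.pre σ) := hpre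
          have hmem := hclosing x.1 x.2 σ hσ hpre'
          rw [hf x σ hσ hpre' hmem] at hx
          have hx' : (productUpdate x.1 E σ hpre').sat φ := hx
          refine ⟨σ, hσ, hpre, ?_⟩
          exact (red x.1.M x.1.s σ hpre').mp hx'
        · rintro ⟨σ, hσ, hpre, hgσ⟩
          have hpre' : x.1.M.sat x.1.s (E.pre σ) := hpre
          have hmem := hclosing x.1 x.2 σ hσ hpre'
          rw [hf x σ hσ hpre' hmem]
          exact (red x.1.M x.1.s σ hpre').mpr hgσ
    rw [heq]
    exact isOpen_biUnion fun σ _ => (hbasic _).inter (hbasic _)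
  refine ⟨?_, key⟩
  refine continuous_generateFrom_iff.mpr ?_
  rintro s ⟨φ, rfl⟩
  exact key φ
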